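/- arXiv:1206.2025 — 4 statements merged into one kernel-verified Lean document; each statement's English description precedes it below -/
import Mathlib

section
/- The subsets I^+(R) := {φ ∈ E(R) : ∃B, i < B ⇒ φ_{ij} = 0} and I^-(R) := {φ ∈ E(R) : ∃B, j > B ⇒ φ_{ij} = 0} are two-sided ideals of E(R), and they satisfy I^+(R) + I^-(R) = E(R). -/
/-!
STATEMENT 1: `I^+(R) = {φ ∈ E(R) : ∃B, i < B → φ_{ij} = 0}` and
`I^-(R) = {φ ∈ E(R) : ∃B, j > B → φ_{ij} = 0}` are two-sided ideals of the
band matrix algebra `E(R)`, and `I^+(R) + I^-(R) = E(R)`.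
-/

open scoped BigOperators

def EMat (R : Type*) [NonUnitalRing R] : Set (ℤ → ℤ → R) :=
  {φ | ∃ K : ℤ, ∀ i j : ℤ, K < |i - j| → φ i j = 0}

noncomputable def matMul {R : Type*} [NonUnitalRing R] (φ ψ : ℤ → ℤ → R) : ℤ → ℤ → R :=
  fun i l => ∑ᶠ j : ℤ, φ i j * ψ j l

def Iplus (R : Type*) [NonUnitalRing R] : Set (ℤ → ℤ → R) :=
  {φ | φ ∈ EMat R ∧ ∃ B : ℤ, ∀ i j : ℤ, i < B → φ i j = 0}

def Iminus (R : Type*) [NonUnitalRing R] : Set (ℤ → ℤ → R) :=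
  {φ | φ ∈ EMat R ∧ ∃ B : ℤ, ∀ i j : ℤ, B < j → φ i j = 0}

private lemma matMul_apply_eq_zero {R : Type*} [NonUnitalRing R] {φ ψ : ℤ → ℤ → R}
    {i l : ℤ} (h : ∀ j, φ i j * ψ j l = 0) : matMul φ ψ i l = 0 := by
  unfold matMul
  rw [finsum_congr h, finsum_zero]

private lemma matMul_mem_EMat {R : Type*} [NonUnitalRing R] {φ ψ : ℤ → ℤ → R}
    (hφ : φ ∈ EMat R) (hψ : ψ ∈ EMat R) : matMul φ ψ ∈ EMat R := by
  obtain ⟨K1, h1⟩ := hφ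
  obtain ⟨K2, h2⟩ := hψ
  refine ⟨K1 + K2, fun i l hil => matMul_apply_eq_zero fun j => ?_⟩
  have := abs_sub_le i j l
  by_cases hj : K1 < |i - j|
  · rw [h1 i j hj, zero_mul]
  · rw [h2 j l (by push_neg at hj; linarith), mul_zero]

theorem iplus_iminus_two_sided_ideals (k R : Type*) [Field k] [NonUnitalRing R]
    [Module k R] [SMulCommClass k R R] [IsScalarTower k R R] :
    -- I^+(R) is a two-sided ideal
    ((∀ φ ψ, φ ∈ Iplus R → ψ ∈ Iplus R → φ + ψ ∈ Iplus R) ∧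
     (∀ φ, φ ∈ Iplus R → -φ ∈ Iplus R) ∧
     (∀ (a : k) φ, φ ∈ Iplus R → a • φ ∈ Iplus R) ∧
     (∀ φ ψ, φ ∈ Iplus R → ψ ∈ EMat R → matMul φ ψ ∈ Iplus R ∧ matMul ψ φ ∈ Iplus R)) ∧
    -- I^-(R) is a two-sided ideal
    ((∀ φ ψ, φ ∈ Iminus R → ψ ∈ Iminus R → φ + ψ ∈ Iminus R) ∧
     (∀ φ, φ ∈ Iminus R → -φ ∈ Iminus R) ∧
     (∀ (a : k) φ, φ ∈ Iminus R → a • φ ∈ Iminus R) ∧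
     (∀ φ ψ, φ ∈ Iminus R → ψ ∈ EMat R → matMul φ ψ ∈ Iminus R ∧ matMul ψ φ ∈ Iminus R)) ∧
    -- I^+(R) + I^-(R) = E(R)
    (∀ φ, φ ∈ EMat R → ∃ α ∈ Iplus R, ∃ β ∈ Iminus R, φ = α + β) := by
  refine ⟨⟨?_, ?_, ?_, ?_⟩, ⟨?_, ?_, ?_, ?_⟩, ?_⟩
  · rintro φ ψ ⟨⟨K1, h1⟩, B1, hB1⟩ ⟨⟨K2, h2⟩, B2, hB2⟩
    refine ⟨⟨max K1 K2, fun i j h => ?_⟩, min B1 B2, fun i j h => ?_⟩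
    · simp only [Pi.add_apply, h1 i j (lt_of_le_of_lt (le_max_left _ _) h),
        h2 i j (lt_of_le_of_lt (le_max_right _ _) h), add_zero]
    · simp only [Pi.add_apply, hB1 i j (lt_of_lt_of_le h (min_le_left _ _)),
        hB2 i j (lt_of_lt_of_le h (min_le_right _ _)), add_zero]
  · rintro φ ⟨⟨K, hK⟩, B, hB⟩
    exact ⟨⟨K, fun i j h => by simp [hK i j h]⟩, B, fun i j h => by simp [hB i j h]⟩
  · rintro a φ ⟨⟨K, hK⟩, B, hB⟩
    exact ⟨⟨K, fun i j h => by simp [hK i j h]⟩, B, fun i j h => by simp [hB i j h]⟩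
  · rintro φ ψ ⟨hφE, B, hB⟩ hψE
    obtain ⟨Kφ, hKφ⟩ := hφE
    obtain ⟨Kψ, hKψ⟩ := hψE
    constructor
    · refine ⟨matMul_mem_EMat ⟨Kφ, hKφ⟩ ⟨Kψ, hKψ⟩, B, fun i l hi =>
        matMul_apply_eq_zero fun j => by rw [hB i j hi, zero_mul]⟩
    · refine ⟨matMul_mem_EMat ⟨Kψ, hKψ⟩ ⟨Kφ, hKφ⟩, B - Kψ, fun i l hi =>
        matMul_apply_eq_zero fun j => ?_⟩
      by_cases hj : Kψ < |i - j|
      · rw [hKψ i j hj, zero_mul]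
      · push_neg at hj
        have : |i - j| ≥ j - i := by
          rcases abs_cases (i - j) with ⟨h, _⟩ | ⟨h, _⟩ <;> linarith
        rw [hB j l (by linarith), mul_zero]
  · rintro φ ψ ⟨⟨K1, h1⟩, B1, hB1⟩ ⟨⟨K2, h2⟩, B2, hB2⟩
    refine ⟨⟨max K1 K2, fun i j h => ?_⟩, max B1 B2, fun i j h => ?_⟩
    · simp only [Pi.add_apply, h1 i j (lt_of_le_of_lt (le_max_left _ _) h),
        h2 i j (lt_of_le_of_lt (le_max_right _ _) h), add_zero]
    · simp only [Pi.add_apply, hB1 i j (lt_of_le_of_lt (le_max_left _ _) h),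
        hB2 i j (lt_of_le_of_lt (le_max_right _ _) h), add_zero]
  · rintro φ ⟨⟨K, hK⟩, B, hB⟩
    exact ⟨⟨K, fun i j h => by simp [hK i j h]⟩, B, fun i j h => by simp [hB i j h]⟩
  · rintro a φ ⟨⟨K, hK⟩, B, hB⟩
    exact ⟨⟨K, fun i j h => by simp [hK i j h]⟩, B, fun i j h => by simp [hB i j h]⟩
  · rintro φ ψ ⟨hφE, B, hB⟩ hψE
    obtain ⟨Kφ, hKφ⟩ := hφE
    obtain ⟨Kψ, hKψ⟩ := hψE
    constructor
    · refine ⟨matMul_mem_EMat ⟨Kφ, hKφ⟩ ⟨Kψ, hKψ⟩, B + Kψ, fun i l hl =>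
        matMul_apply_eq_zero fun j => ?_⟩
      by_cases hj : B < j
      · rw [hB i j hj, zero_mul]
      · push_neg at hj
        have : |j - l| ≥ l - j := by
          rcases abs_cases (j - l) with ⟨h, _⟩ | ⟨h, _⟩ <;> linarith
        rw [hKψ j l (by linarith), mul_zero]
    · refine ⟨matMul_mem_EMat ⟨Kψ, hKψ⟩ ⟨Kφ, hKφ⟩, B, fun i l hl =>
        matMul_apply_eq_zero fun j => by rw [hB j l hl, mul_zero]⟩
  · rintro φ ⟨K, hK⟩
    refine ⟨fun i j => if 0 ≤ i then φ i j else 0, ?_,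
            fun i j => if 0 ≤ i then 0 else φ i j, ?_, ?_⟩
    · refine ⟨⟨K, fun i j h => by simp [hK i j h]⟩, 0, fun i j h => by
        simp [not_le.mpr h]⟩
    · refine ⟨⟨K, fun i j h => by simp [hK i j h]⟩, K, fun i j h => ?_⟩
      by_cases hi : 0 ≤ i
      · simp [hi]
      · push_neg at hi
        have : K < |i - j| := by
          rcases abs_cases (i - j) with ⟨h', _⟩ | ⟨h', _⟩ <;> omega
        simp [not_le.mpr hi, hK i j this]
    · funext i j
      by_cases hi : 0 ≤ i <;> simp [hi]
end

section
/- The operators H_i defined by (H_i f)_{s_1…0…s_n} := (−1)^{#{j : j>i, s_j=0}} Σ_{γ_i∈{±}} P_i^{−γ_i} f_{s_1…γ_i…s_n} (and zero on components with s_i ∈ {±}) satisfy H_i² = 0, H_iH_j + H_jH_i = 0, ∂_iH_j + H_j∂_i = 0 for i ≠ j, and ∂_iH_i + H_i∂_i = 1 − ε_i. -/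
/-!
STATEMENT 9: The operators `H_i` on `N^•`, defined by
`(H_i f)_{s₁…0…s_n} = (−1)^{#{j : j>i, s_j=0}} ∑_{γ∈{±}} P_i^{−γ} f_{s₁…γ…s_n}`
(and zero on components with `s_i ∈ {±}`), satisfy `H_i² = 0`,
`H_iH_j + H_jH_i = 0`, `∂_iH_j + H_j∂_i = 0` for `i ≠ j`, and
`∂_iH_i + H_i∂_i = 1 − ε_i`.
-/

open scoped Classical

abbrev Fam (n : ℕ) (A : Type*) := (Fin n → SignType) → A

noncomputable def zcount {n : ℕ} (s : Fin n → SignType) (i : Fin n) : ℕ :=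
  (Finset.univ.filter fun j => i < j ∧ s j = 0).card

noncomputable def bd {n : ℕ} {A : Type*} [Ring A] (i : Fin n) (f : Fam n A) : Fam n A :=
  fun s => if s i = 0 then 0
    else ((-1 : ℤ) ^ zcount s i) • f (Function.update s i 0)

noncomputable def Psgn {n : ℕ} {A : Type*} [Ring A] (P : Fin n → A) (i : Fin n) :
    SignType → A
  | SignType.pos => P i
  | SignType.neg => 1 - P i
  | SignType.zero => 0

noncomputable def eps {n : ℕ} {A : Type*} [Ring A] (P : Fin n → A) (i : Fin n)
    (f : Fam n A) : Fam n A :=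
  fun s => if s i = 0 then 0
    else ((s i : ℤ)) • (Psgn P i (s i) *
      ((1 : ℤ) • f (Function.update s i 1) + (-1 : ℤ) • f (Function.update s i (-1))))

/-- The homotopy operator `H_i`: `P_i^{−γ}` is `P_i⁻ = 1 − P_i⁺` for `γ = +`
and `P_i⁺` for `γ = −`. -/
noncomputable def hmt {n : ℕ} {A : Type*} [Ring A] (P : Fin n → A) (i : Fin n)
    (f : Fam n A) : Fam n A :=
  fun s => if s i = 0 then
      ((-1 : ℤ) ^ zcount s i) •
        ((1 - P i) * f (Function.update s i 1) + P i * f (Function.update s i (-1)))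
    else 0

section AuxLemmas

set_option linter.unreachableTactic false
set_option linter.unusedTactic false

lemma aux_card_split {α : Type*} [DecidableEq α] (F : Finset α) (j : α) :
    F.card = (F.erase j).card + (if j ∈ F then 1 else 0) := by
  by_cases h : j ∈ F
  · rw [if_pos h, Finset.card_erase_add_one h]
  · simp [h, Finset.erase_eq_of_notMem h]

lemma aux_zcount_update_eq {n : ℕ} (s : Fin n → SignType) {i j : Fin n} (h : ¬ j < i)
    (a : SignType) : zcount (Function.update s i a) j = zcount s j := by
  unfold zcount
  congr 1
  apply Finset.filter_congr
  intro k _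
  by_cases hk : k = i
  · subst hk; simp [h]
  · simp [Function.update_of_ne hk]

lemma aux_zcount_update_lt {n : ℕ} (s : Fin n → SignType) {i j : Fin n} (h : j < i)
    (a : SignType) :
    zcount (Function.update s i a) j + (if s i = 0 then 1 else 0)
      = zcount s j + (if a = 0 then 1 else 0) := by
  unfold zcount
  rw [aux_card_split (Finset.univ.filter fun k => j < k ∧ Function.update s i a k = 0) i,
    aux_card_split (Finset.univ.filter fun k => j < k ∧ s k = 0) i]
  have herase : (Finset.univ.filter fun k => j < k ∧ Function.update s i a k = 0).erase i
      = (Finset.univ.filter fun k => j < k ∧ s k = 0).erase i := by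
    ext k
    simp only [Finset.mem_erase, Finset.mem_filter, Finset.mem_univ, true_and]
    constructor <;> rintro ⟨hk, h1, h2⟩
    · exact ⟨hk, h1, by rwa [Function.update_of_ne hk] at h2⟩
    · exact ⟨hk, h1, by rwa [Function.update_of_ne hk]⟩
  rw [herase]
  simp only [Finset.mem_filter, Finset.mem_univ, true_and, Function.update_self, h]
  by_cases ha : a = 0 <;> by_cases hs : s i = 0 <;> simp [ha, hs] <;> omega

lemma aux_zc_remove {n : ℕ} {s : Fin n → SignType} {i j : Fin n} (h : j < i)
    (hs : s i = 0) {a : SignType} (ha : a ≠ 0) :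
    zcount s j = zcount (Function.update s i a) j + 1 := by
  have := aux_zcount_update_lt s h a
  simp [hs, ha] at this
  omega

lemma aux_zc_add {n : ℕ} {s : Fin n → SignType} {i j : Fin n} (h : j < i)
    (hs : s i ≠ 0) : zcount (Function.update s i 0) j = zcount s j + 1 := by
  have := aux_zcount_update_lt s h 0
  simp [hs] at this
  omega

lemma aux_key_comm {A : Type*} [Ring A] (p q : A) (h : p * q = q * p) (a b c d : A) :
    (1 - p) * ((1 - q) * a + q * b) + p * ((1 - q) * c + q * d)
      = (1 - q) * ((1 - p) * a + p * c) + q * ((1 - p) * b + p * d) := by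
  have h1 : (1 - p) * (1 - q) = (1 - q) * (1 - p) := by
    simp only [mul_sub, sub_mul, one_mul, mul_one, h]
    abel
  have h2 : (1 - p) * q = q * (1 - p) := by
    simp only [mul_sub, sub_mul, one_mul, mul_one, h]
  have h3 : p * (1 - q) = (1 - q) * p := by
    simp only [mul_sub, sub_mul, one_mul, mul_one, h]
  simp only [mul_add, ← mul_assoc, h1, h2, h3, h]
  abel

lemma aux_smul_cancel {A : Type*} [Ring A] (k : ℕ) (x : A) :
    ((-1 : ℤ) ^ k) • ((-1 : ℤ) ^ k) • x = x := by
  rw [smul_smul, ← pow_add, Even.neg_one_pow ⟨k, rfl⟩, one_smul]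

lemma aux_sign_flip {A : Type*} [Ring A] (m c : ℕ) (x : A) :
    ((-1 : ℤ) ^ (m + 1 + c)) • x = -(((-1 : ℤ) ^ (c + m)) • x) := by
  have : (-1 : ℤ) ^ (m + 1 + c) = -((-1 : ℤ) ^ (c + m)) := by
    rw [show m + 1 + c = (c + m) + 1 by ring, pow_succ]; ring
  rw [this, neg_smul]

lemma aux_sign_flip2 {A : Type*} [Ring A] (a b : ℕ) (x : A) :
    ((-1 : ℤ) ^ (a + (b + 1))) • x = -(((-1 : ℤ) ^ (b + a)) • x) := by
  have : (-1 : ℤ) ^ (a + (b + 1)) = -((-1 : ℤ) ^ (b + a)) := by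
    rw [show a + (b + 1) = (b + a) + 1 by ring, pow_succ]; ring
  rw [this, neg_smul]

lemma aux_pull_smul {A : Type*} [Ring A] (z1 z2 : ℤ) (p q x y : A) :
    z1 • (p * (z2 • x) + q * (z2 • y)) = (z1 * z2) • (p * x + q * y) := by
  rw [mul_smul_comm, mul_smul_comm, ← smul_add, smul_smul]

lemma aux_hmt_sq {n : ℕ} {A : Type*} [Ring A] (P : Fin n → A)
    (i : Fin n) (f : Fam n A) : hmt P i (hmt P i f) = 0 := by
  funext s
  by_cases h : s i = 0
  · simp [hmt, h, Function.update_self]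
  · simp [hmt, h]

lemma aux_hmt_anticomm_lt {n : ℕ} {A : Type*} [Ring A] (P : Fin n → A)
    (hcomm : ∀ i j, P i * P j = P j * P i)
    (i j : Fin n) (f : Fam n A) (hlt : i < j) (s : Fin n → SignType)
    (hi : s i = 0) (hj : s j = 0) :
    hmt P i (hmt P j f) s + hmt P j (hmt P i f) s = 0 := by
  have hij : i ≠ j := ne_of_lt hlt
  have ha1 : Function.update s i 1 j = s j := Function.update_of_ne hij.symm 1 s
  have ha2 : Function.update s i (-1) j = s j := Function.update_of_ne hij.symm (-1) s
  have hb1 : Function.update s j 1 i = s i := Function.update_of_ne hij 1 s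
  have hb2 : Function.update s j (-1) i = s i := Function.update_of_ne hij (-1) s
  have hc1 : Function.update (Function.update s j 1) i 1
      = Function.update (Function.update s i 1) j 1 := Function.update_comm hij.symm 1 1 s
  have hc2 : Function.update (Function.update s j 1) i (-1)
      = Function.update (Function.update s i (-1)) j 1 := Function.update_comm hij.symm 1 (-1) s
  have hc3 : Function.update (Function.update s j (-1)) i 1
      = Function.update (Function.update s i 1) j (-1) :=
    Function.update_comm hij.symm (-1) 1 s
  have hc4 : Function.update (Function.update s j (-1)) i (-1)
      = Function.update (Function.update s i (-1)) j (-1) :=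
    Function.update_comm hij.symm (-1) (-1) s
  have e1 : zcount (Function.update s i 1) j = zcount s j :=
    aux_zcount_update_eq s (asymm hlt) 1
  have e1' : zcount (Function.update s i (-1)) j = zcount s j :=
    aux_zcount_update_eq s (asymm hlt) (-1)
  have em1 : zcount s i = zcount (Function.update s j 1) i + 1 :=
    aux_zc_remove hlt hj (by decide)
  have em2 : zcount (Function.update s j (-1)) i = zcount (Function.update s j 1) i := by
    have := aux_zc_remove hlt hj (show (-1 : SignType) ≠ 0 by decide)
    omega
  simp only [hmt, hi, hj, ha1, ha2, hb1, hb2, eq_self_iff_true, if_true]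
  rw [e1, e1', hc1, hc2, hc3, hc4, em2, aux_pull_smul, aux_pull_smul,
    aux_key_comm (P i) (P j) (hcomm i j), ← pow_add, ← pow_add, em1, aux_sign_flip,
    neg_add_cancel]

lemma aux_hmt_anticomm {n : ℕ} {A : Type*} [Ring A] (P : Fin n → A)
    (hcomm : ∀ i j, P i * P j = P j * P i)
    (i j : Fin n) (f : Fam n A) :
    hmt P i (hmt P j f) + hmt P j (hmt P i f) = 0 := by
  rcases eq_or_ne i j with rfl | hij
  · rw [aux_hmt_sq, add_zero]
  funext s
  simp only [Pi.add_apply, Pi.zero_apply]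
  by_cases hi : s i = 0
  · by_cases hj : s j = 0
    · rcases lt_or_gt_of_ne hij with hlt | hlt
      · exact aux_hmt_anticomm_lt P hcomm i j f hlt s hi hj
      · rw [add_comm]
        exact aux_hmt_anticomm_lt P hcomm j i f hlt s hj hi
    · have ha1 : Function.update s i 1 j = s j := Function.update_of_ne hij.symm 1 s
      have ha2 : Function.update s i (-1) j = s j := Function.update_of_ne hij.symm (-1) s
      simp [hmt, hj, ha1, ha2]
  · have hb1 : Function.update s j 1 i = s i := Function.update_of_ne hij 1 s
    have hb2 : Function.update s j (-1) i = s i := Function.update_of_ne hij (-1) s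
    simp [hmt, hi, hb1, hb2]

lemma aux_bd_hmt {n : ℕ} {A : Type*} [Ring A] (P : Fin n → A)
    (i j : Fin n) (f : Fam n A) (hij : i ≠ j) :
    bd i (hmt P j f) + hmt P j (bd i f) = 0 := by
  funext s
  simp only [Pi.add_apply, Pi.zero_apply]
  have h1 : Function.update s j 1 i = s i := Function.update_of_ne hij 1 s
  have h2 : Function.update s j (-1) i = s i := Function.update_of_ne hij (-1) s
  have huj : Function.update s i 0 j = s j := Function.update_of_ne hij.symm 0 s
  by_cases hj : s j = 0
  · by_cases hi : s i = 0
    · simp [bd, hmt, hi, hj, h1, h2]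
    · have hc1 : Function.update (Function.update s j 1) i 0
          = Function.update (Function.update s i 0) j 1 := Function.update_comm hij.symm 1 0 s
      have hc2 : Function.update (Function.update s j (-1)) i 0
          = Function.update (Function.update s i 0) j (-1) :=
        Function.update_comm hij.symm (-1) 0 s
      simp only [bd, hmt, hi, hj, h1, h2, huj, if_true, if_false, hc1, hc2,
        eq_self_iff_true, if_neg hi]
      rcases lt_or_gt_of_ne hij with hlt | hlt
      · have e0 : zcount (Function.update s i 0) j = zcount s j :=
          aux_zcount_update_eq s (asymm hlt) 0
        have e1 : zcount s i = zcount (Function.update s j 1) i + 1 :=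
          aux_zc_remove hlt hj (by decide)
        have e2 : zcount (Function.update s j (-1)) i
            = zcount (Function.update s j 1) i := by
          have := aux_zc_remove hlt hj (show (-1 : SignType) ≠ 0 by decide)
          omega
        rw [e0, e2, e1, aux_pull_smul, smul_smul, ← pow_add, ← pow_add, aux_sign_flip,
          neg_add_cancel]
      · have e0 : zcount (Function.update s j 1) i = zcount s i :=
          aux_zcount_update_eq s (asymm hlt) 1
        have e0' : zcount (Function.update s j (-1)) i = zcount s i :=
          aux_zcount_update_eq s (asymm hlt) (-1)
        have e1 : zcount (Function.update s i 0) j = zcount s j + 1 := aux_zc_add hlt hi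
        rw [e0, e0', e1, aux_pull_smul, smul_smul, ← pow_add, ← pow_add, aux_sign_flip2,
          neg_add_cancel]
  · simp [bd, hmt, hj, huj]

lemma aux_homotopy {n : ℕ} {A : Type*} [Ring A] (P : Fin n → A)
    (i : Fin n) (f : Fam n A) :
    bd i (hmt P i f) + hmt P i (bd i f) = f - eps P i f := by
  funext s
  simp only [Pi.add_apply, Pi.sub_apply]
  by_cases h : s i = 0
  · have hb : bd i (hmt P i f) s = 0 := by simp [bd, h]
    have he : eps P i f s = 0 := by simp [eps, h]
    rw [hb, he, zero_add, sub_zero]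
    have h1 : Function.update s i 1 i = (1 : SignType) := Function.update_self i 1 s
    have h2 : Function.update s i (-1) i = (-1 : SignType) := Function.update_self i (-1) s
    have hu : Function.update s i 0 = s := by rw [← h]; exact Function.update_eq_self i s
    simp only [hmt, bd, if_pos h, h1, h2, Function.update_idem, hu,
      aux_zcount_update_eq s (lt_irrefl i)]
    rw [if_neg (by decide : ¬((1 : SignType) = 0)), if_neg (by decide : ¬((-1 : SignType) = 0)),
      aux_pull_smul, ← pow_add, Even.neg_one_pow ⟨zcount s i, rfl⟩, one_smul, ← add_mul,
      sub_add_cancel, one_mul]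
  · have hh : hmt P i (bd i f) s = 0 := by simp [hmt, h]
    have h0 : Function.update s i 0 i = (0 : SignType) := Function.update_self i 0 s
    rw [hh, add_zero]
    simp only [bd, hmt, eps, if_neg h, h0, if_pos rfl, Function.update_idem,
      aux_zcount_update_eq s (lt_irrefl i), aux_smul_cancel]
    rcases hsi : s i with _ | _ | _
    · exact absurd hsi h
    · have hu : Function.update s i (-1) = s := by
        rw [show (-1 : SignType) = SignType.neg from rfl, ← hsi]
        exact Function.update_eq_self i s
      rw [hu, if_true, aux_smul_cancel,
        show ((SignType.neg : SignType) : ℤ) = -1 from rfl]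
      simp only [Psgn, one_smul, neg_smul, neg_one_zsmul]
      noncomm_ring
    · have hu : Function.update s i 1 = s := by
        rw [show (1 : SignType) = SignType.pos from rfl, ← hsi]
        exact Function.update_eq_self i s
      rw [hu, if_true, aux_smul_cancel,
        show ((SignType.pos : SignType) : ℤ) = 1 from rfl]
      simp only [Psgn, one_smul, neg_smul, neg_one_zsmul]
      noncomm_ring

end AuxLemmas

theorem hmt_identities {n : ℕ} {A : Type*} [Ring A] (P : Fin n → A)
    (hidem : ∀ i, P i * P i = P i)
    (hcomm : ∀ i j, P i * P j = P j * P i) :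
    (∀ (i : Fin n) (f : Fam n A), hmt P i (hmt P i f) = 0) ∧
    (∀ (i j : Fin n) (f : Fam n A), hmt P i (hmt P j f) + hmt P j (hmt P i f) = 0) ∧
    (∀ (i j : Fin n) (f : Fam n A), i ≠ j → bd i (hmt P j f) + hmt P j (bd i f) = 0) ∧
    (∀ (i : Fin n) (f : Fam n A), bd i (hmt P i f) + hmt P i (bd i f) = f - eps P i f) :=
  ⟨fun i f => aux_hmt_sq P i f,
   fun i j f => aux_hmt_anticomm P hcomm i j f,
   fun i j f hij => aux_bd_hmt P i j f hij,
   fun i f => aux_homotopy P i f⟩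
end

section
/- The operator H := H_1 + ε_1H_2 + … + ε_1ε_2⋯ε_{n−1}H_n satisfies H² = 0 and ∂H + H∂ = 1 − ε_1⋯ε_n. -/
/-!
STATEMENT 10: The operator `H := H₁ + ε₁H₂ + … + ε₁ε₂⋯ε_{n−1}H_n` satisfies
`H² = 0` and `∂H + H∂ = 1 − ε₁⋯ε_n`.
-/

open scoped Classical

/-- The total differential `∂ = ∑ ∂_i`. -/
noncomputable def bigD {n : ℕ} {A : Type*} [Ring A] (f : Fam n A) : Fam n A :=
  fun s => ∑ i : Fin n, bd i f s

/-- `ε₁ε₂⋯ε_m` (the composite of the first `m` operators `ε`). -/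
noncomputable def epsUpTo {n : ℕ} {A : Type*} [Ring A] (P : Fin n → A) :
    ℕ → Fam n A → Fam n A
  | 0 => id
  | (m+1) => fun f => if h : m < n then epsUpTo P m (eps P ⟨m, h⟩ f) else epsUpTo P m f

/-- `H := H₁ + ε₁H₂ + … + ε₁⋯ε_{n−1}H_n`. -/
noncomputable def bigH {n : ℕ} {A : Type*} [Ring A] (P : Fin n → A) (f : Fam n A) :
    Fam n A :=
  fun s => ∑ i : Fin n, epsUpTo P (i : ℕ) (hmt P i f) s

/- ### Auxiliary lemmas -/



lemma zcount_update {n : ℕ} (s : Fin n → SignType) (j : Fin n) (c : SignType) (i : Fin n) :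
    zcount (Function.update s j c) i + (if i < j ∧ s j = 0 then 1 else 0)
      = zcount s i + (if i < j ∧ c = 0 then 1 else 0) := by
  classical
  simp only [zcount, Finset.card_filter]
  rw [← Finset.sum_erase_add _ _ (Finset.mem_univ j),
      ← Finset.sum_erase_add _ _ (Finset.mem_univ j)]
  have h1 : ∀ k ∈ Finset.univ.erase j,
      (if i < k ∧ Function.update s j c k = 0 then (1:ℕ) else 0)
        = (if i < k ∧ s k = 0 then 1 else 0) := by
    intro k hk
    rw [Function.update_of_ne (Finset.ne_of_mem_erase hk)]
  rw [Finset.sum_congr rfl h1]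
  simp only [Function.update_self]
  omega

lemma zcount_update_of_le {n : ℕ} {j i : Fin n} (h : j ≤ i) (s : Fin n → SignType)
    (c : SignType) : zcount (Function.update s j c) i = zcount s i := by
  have := zcount_update s j c i
  rw [if_neg (fun hc : i < j ∧ _ => absurd hc.1 (not_lt.2 h)),
      if_neg (fun hc : i < j ∧ _ => absurd hc.1 (not_lt.2 h))] at this
  omega

lemma zcount_update_iff {n : ℕ} {j i : Fin n} {s : Fin n → SignType} {c : SignType}
    (h : (s j = 0) ↔ (c = 0)) :
    zcount (Function.update s j c) i = zcount s i := by
  have := zcount_update s j c i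
  by_cases hij : i < j
  · by_cases h0 : s j = 0
    · rw [if_pos ⟨hij, h0⟩, if_pos ⟨hij, h.1 h0⟩] at this; omega
    · rw [if_neg (fun hc => h0 hc.2), if_neg (fun hc => h0 (h.2 hc.2))] at this; omega
  · rw [if_neg (fun hc => hij hc.1), if_neg (fun hc => hij hc.1)] at this; omega

lemma zcount_update_succ {n : ℕ} {j i : Fin n} {s : Fin n → SignType} {c : SignType}
    (hij : i < j) (h0 : s j = 0) (hc : c ≠ 0) :
    zcount (Function.update s j c) i + 1 = zcount s i := by
  have := zcount_update s j c i
  rw [if_pos ⟨hij, h0⟩, if_neg (fun h => hc h.2)] at this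
  omega

lemma zcount_update_zero {n : ℕ} {j i : Fin n} {s : Fin n → SignType}
    (hij : i < j) (h0 : s j ≠ 0) :
    zcount (Function.update s j 0) i = zcount s i + 1 := by
  have := zcount_update s j 0 i
  rw [if_neg (fun h => h0 h.2), if_pos ⟨hij, rfl⟩] at this
  omega

/- ### SignType helpers -/

lemma st_one_ne : (1 : SignType) ≠ 0 := by decide
lemma st_negone_ne : (-1 : SignType) ≠ 0 := by decide

section
variable {n : ℕ} {A : Type*} [Ring A] (P : Fin n → A)

lemma Psgn_one (i : Fin n) : Psgn P i 1 = P i := rfl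
lemma Psgn_negone (i : Fin n) : Psgn P i (-1) = 1 - P i := rfl
lemma coe_st_one : ((1 : SignType) : ℤ) = 1 := rfl
lemma coe_st_negone : ((-1 : SignType) : ℤ) = -1 := rfl

lemma comm_left {a b : A} (h : a * b = b * a) (c : A) : a * (b * c) = b * (a * c) := by
  rw [← mul_assoc, h, mul_assoc]

lemma Psgn_commute (hcomm : ∀ i j, P i * P j = P j * P i) (i j : Fin n) (t : SignType) :
    Psgn P j t * P i = P i * Psgn P j t := by
  cases t <;> simp [Psgn, sub_mul, mul_sub, hcomm j i]

lemma Psgn_commute' (hcomm : ∀ i j, P i * P j = P j * P i) (i j : Fin n) (t : SignType) :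
    Psgn P j t * (1 - P i) = (1 - P i) * Psgn P j t := by
  rw [mul_sub, sub_mul, mul_one, one_mul, Psgn_commute P hcomm]

/- ### trivial annihilations -/

lemma eps_hmt_self (i : Fin n) (f : Fam n A) : eps P i (hmt P i f) = 0 := by
  funext s
  simp only [eps, hmt, Pi.zero_apply]
  rcases h : s i with _ | _ | _ <;> simp [h, Function.update_self]

lemma hmt_hmt_self (i : Fin n) (f : Fam n A) : hmt P i (hmt P i f) = 0 := by
  funext s
  simp only [hmt, Pi.zero_apply]
  rcases h : s i with _ | _ | _ <;> simp [h, Function.update_self]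

lemma bd_eps_self (i : Fin n) (f : Fam n A) : bd i (eps P i f) = 0 := by
  funext s
  simp only [bd, eps, Pi.zero_apply]
  rcases h : s i with _ | _ | _ <;> simp [h, Function.update_self]

lemma hmt_eps_self (hidem : ∀ i, P i * P i = P i) (i : Fin n) (f : Fam n A) :
    hmt P i (eps P i f) = 0 := by
  funext s
  simp only [hmt, eps, Pi.zero_apply, Function.update_self, Function.update_idem,
    if_neg st_one_ne, if_neg st_negone_ne, Psgn_one, Psgn_negone, coe_st_one,
    coe_st_negone, one_smul, neg_one_zsmul]
  split_ifs with h
  · have h1 : (1 - P i) * P i = 0 := by rw [sub_mul, one_mul, hidem, sub_self]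
    have h2 : P i * (1 - P i) = 0 := by rw [mul_sub, mul_one, hidem, sub_self]
    rw [mul_neg, ← mul_assoc, ← mul_assoc, h1, h2]
    simp
  · rfl

lemma eps_bd_self (i : Fin n) (f : Fam n A) : eps P i (bd i f) = 0 := by
  funext s
  simp only [eps, bd, Pi.zero_apply, Function.update_self, Function.update_idem,
    if_neg st_one_ne, if_neg st_negone_ne, one_smul, neg_one_zsmul]
  split_ifs with h
  · rfl
  · rw [zcount_update_of_le le_rfl, zcount_update_of_le le_rfl]
    simp

/- ### additivity -/

lemma eps_zero (i : Fin n) : eps P i (0 : Fam n A) = 0 := by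
  funext s; simp [eps]

lemma eps_add (i : Fin n) (f g : Fam n A) :
    eps P i (f + g) = eps P i f + eps P i g := by
  funext s
  simp only [eps, Pi.add_apply]
  split_ifs with h
  · simp
  · rw [← smul_add, ← mul_add]
    congr 2
    simp only [smul_add]
    abel

lemma hmt_zero (i : Fin n) : hmt P i (0 : Fam n A) = 0 := by
  funext s; simp [hmt]

lemma hmt_add (i : Fin n) (f g : Fam n A) :
    hmt P i (f + g) = hmt P i f + hmt P i g := by
  funext s
  simp only [hmt, Pi.add_apply]
  split_ifs with h
  · rw [← smul_add]
    congr 1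
    simp only [mul_add]
    abel
  · simp

lemma bd_zero (i : Fin n) : bd i (0 : Fam n A) = (0 : Fam n A) := by
  funext s; simp [bd]

lemma bd_add (i : Fin n) (f g : Fam n A) :
    bd i (f + g) = bd i f + bd i g := by
  funext s
  simp only [bd, Pi.add_apply]
  split_ifs with h
  · simp
  · rw [← smul_add]

end

lemma st_pos_ne : SignType.pos ≠ 0 := by decide
lemma st_neg_ne : SignType.neg ≠ 0 := by decide

section
variable {n : ℕ} {A : Type*} [Ring A] (P : Fin n → A)

lemma Psgn_pos (i : Fin n) : Psgn P i SignType.pos = P i := rfl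
lemma Psgn_neg (i : Fin n) : Psgn P i SignType.neg = 1 - P i := rfl
lemma coe_st_pos : ((SignType.pos : SignType) : ℤ) = 1 := rfl
lemma coe_st_neg : ((SignType.neg : SignType) : ℤ) = -1 := rfl

lemma comm_one_sub_one_sub {a b : A} (h : a * b = b * a) :
    (1 - a) * (1 - b) = (1 - b) * (1 - a) := by
  rw [one_sub_mul, one_sub_mul, mul_one_sub, mul_one_sub, h]
  abel

lemma comm_one_sub_left {a b : A} (h : a * b = b * a) :
    (1 - a) * b = b * (1 - a) := by
  rw [one_sub_mul, mul_one_sub, h]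

lemma hmt_eps_comm (hcomm : ∀ i j, P i * P j = P j * P i) {i j : Fin n} (hij : i ≠ j)
    (f : Fam n A) : hmt P i (eps P j f) = eps P j (hmt P i f) := by
  have hji : j ≠ i := hij.symm
  funext s
  simp only [hmt, eps, Function.update_of_ne hij, Function.update_of_ne hji,
    Function.update_self]
  by_cases hi : s i = 0
  · rcases hsj : s j with _ | _ | _
    · simp [hi, hsj]
    · -- s j = neg
      have z1 : zcount (Function.update s j 1) i = zcount s i :=
        zcount_update_iff (by rw [hsj]; decide)
      have z2 : zcount (Function.update s j (-1)) i = zcount s i :=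
        zcount_update_iff (by rw [hsj]; decide)
      simp only [hi, hsj, if_pos, if_neg st_neg_ne, if_neg st_one_ne, if_neg st_negone_ne,
        coe_st_neg, Psgn_neg, neg_one_zsmul, one_smul, if_true, z1, z2]
      simp only [Function.update_comm hij, ← smul_neg, ← smul_add, mul_smul_comm]
      congr 1
      have c1 : (1 - P j) * (1 - P i) = (1 - P i) * (1 - P j) :=
        comm_one_sub_one_sub (hcomm j i)
      have c2 : (1 - P j) * P i = P i * (1 - P j) := comm_one_sub_left (hcomm j i)
      simp only [mul_add, mul_neg, neg_add, comm_left c1, comm_left c2]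
      abel
    · -- s j = pos
      have z1 : zcount (Function.update s j 1) i = zcount s i :=
        zcount_update_iff (by rw [hsj]; decide)
      have z2 : zcount (Function.update s j (-1)) i = zcount s i :=
        zcount_update_iff (by rw [hsj]; decide)
      simp only [hi, hsj, if_pos, if_neg st_pos_ne, if_neg st_one_ne, if_neg st_negone_ne,
        coe_st_pos, Psgn_pos, neg_one_zsmul, one_smul, if_true, z1, z2]
      simp only [Function.update_comm hij, ← smul_neg, ← smul_add, mul_smul_comm]
      congr 1
      have c1 : P j * (1 - P i) = (1 - P i) * P j := (comm_one_sub_left (hcomm i j)).symm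
      have c2 : P j * P i = P i * P j := hcomm j i
      simp only [mul_add, mul_neg, neg_add, comm_left c1, comm_left c2]
      abel
  · rcases hsj : s j with _ | _ | _
    · simp [hi, hsj]
    · simp [hi, hsj, st_neg_ne]
    · simp [hi, hsj, st_pos_ne]

end

section
variable {n : ℕ} {A : Type*} [Ring A] (P : Fin n → A)

lemma negpow_smul_comm (a b : ℕ) (x : A) :
    ((-1:ℤ)^a) • ((-1:ℤ)^b) • x = ((-1:ℤ)^b) • ((-1:ℤ)^a) • x := by
  rw [smul_smul, smul_smul, mul_comm]

lemma negpow_flip1 (a b : ℕ) (x : A) :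
    ((-1:ℤ)^a) • ((-1:ℤ)^(b+1)) • x = -(((-1:ℤ)^b) • ((-1:ℤ)^a) • x) := by
  rw [smul_smul, smul_smul, ← neg_smul]
  congr 1
  ring

lemma negpow_flip2 (a b : ℕ) (x : A) :
    ((-1:ℤ)^(a+1)) • ((-1:ℤ)^b) • x = -(((-1:ℤ)^b) • ((-1:ℤ)^a) • x) := by
  rw [smul_smul, smul_smul, ← neg_smul]
  congr 1
  ring

lemma negpow_self_smul (a : ℕ) (x : A) : ((-1:ℤ)^a) • ((-1:ℤ)^a) • x = x := by
  rw [smul_smul, ← pow_add, Even.neg_one_pow ⟨a, rfl⟩, one_smul]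

lemma bd_eps_comm (hcomm : ∀ i j, P i * P j = P j * P i) {k j : Fin n} (hkj : k ≠ j)
    (f : Fam n A) : bd k (eps P j f) = eps P j (bd k f) := by
  have hjk : j ≠ k := hkj.symm
  funext s
  simp only [bd, eps, Function.update_of_ne hkj, Function.update_of_ne hjk,
    Function.update_self]
  by_cases hk : s k = 0
  · rcases hsj : s j with _ | _ | _ <;> simp [hk, hsj]
  · rcases hsj : s j with _ | _ | _
    · simp [hk, hsj]
    · have z1 : zcount (Function.update s j 1) k = zcount s k :=
        zcount_update_iff (by rw [hsj]; decide)
      have z2 : zcount (Function.update s j (-1)) k = zcount s k :=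
        zcount_update_iff (by rw [hsj]; decide)
      simp only [hk, hsj, if_neg st_neg_ne, if_neg st_one_ne, if_neg st_negone_ne,
        if_neg hk, if_false, coe_st_neg, Psgn_neg, neg_one_zsmul, one_smul, z1, z2]
      simp only [Function.update_comm hkj, ← smul_neg, ← smul_add, mul_smul_comm]
    · have z1 : zcount (Function.update s j 1) k = zcount s k :=
        zcount_update_iff (by rw [hsj]; decide)
      have z2 : zcount (Function.update s j (-1)) k = zcount s k :=
        zcount_update_iff (by rw [hsj]; decide)
      simp only [hk, hsj, if_neg st_pos_ne, if_neg st_one_ne, if_neg st_negone_ne,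
        if_neg hk, if_false, coe_st_pos, Psgn_pos, neg_one_zsmul, one_smul, z1, z2]
      simp only [Function.update_comm hkj, ← smul_neg, ← smul_add, mul_smul_comm]

end

section
variable {n : ℕ} {A : Type*} [Ring A] (P : Fin n → A)

lemma st_zero_eq : SignType.zero = (0 : SignType) := rfl
lemma coe_st_zero : ((SignType.zero : SignType) : ℤ) = 0 := rfl

lemma bd_hmt_anti {k i : Fin n} (hki : k ≠ i) (f : Fam n A) :
    bd k (hmt P i f) = - hmt P i (bd k f) := by
  have hik : i ≠ k := hki.symm
  funext s
  simp only [bd, hmt, Pi.neg_apply, Function.update_of_ne hki, Function.update_of_ne hik,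
    Function.update_self]
  by_cases hk : s k = 0
  · simp [hk]
  · by_cases hi : s i = 0
    · rcases lt_or_gt_of_ne hki with h | h
      · -- k < i
        have z1 : zcount (Function.update s k 0) i = zcount s i :=
          zcount_update_of_le (le_of_lt h) s 0
        have z2 : zcount (Function.update s i 1) k + 1 = zcount s k :=
          zcount_update_succ h hi st_one_ne
        have z3 : zcount (Function.update s i (-1)) k + 1 = zcount s k :=
          zcount_update_succ h hi st_negone_ne
        have e : zcount (Function.update s i (-1)) k = zcount (Function.update s i 1) k := by
          omega
        simp only [if_pos hi, if_neg hk, z1, e]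
        rw [← z2]
        simp only [Function.update_comm hki, mul_smul_comm, ← smul_add]
        rw [negpow_flip2]
      · -- i < k
        have z1 : zcount (Function.update s k 0) i = zcount s i + 1 :=
          zcount_update_zero h hk
        have z2 : zcount (Function.update s i 1) k = zcount s k :=
          zcount_update_of_le (le_of_lt h) s 1
        have z3 : zcount (Function.update s i (-1)) k = zcount s k :=
          zcount_update_of_le (le_of_lt h) s (-1)
        simp only [if_pos hi, if_neg hk, z1, z2, z3]
        simp only [Function.update_comm hki, mul_smul_comm, ← smul_add]
        rw [negpow_flip1]
    · simp [hk, hi]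

lemma cross_expand {p q : A} (h : p * q = q * p) (a b c d : A) :
    (1-q)*((1-p)*a + p*c) + q*((1-p)*b + p*d)
      = (1-p)*((1-q)*a + q*b) + p*((1-q)*c + q*d) := by
  have c1 : (1-q)*(1-p) = (1-p)*(1-q) := comm_one_sub_one_sub h.symm
  have c2 : (1-q)*p = p*(1-q) := comm_one_sub_left h.symm
  have c3 : q*(1-p) = (1-p)*q := (comm_one_sub_left h).symm
  have c4 : q*p = p*q := h.symm
  simp only [mul_add, comm_left c1, comm_left c2, comm_left c3, comm_left c4]
  abel

lemma hmt_hmt_anti (hcomm : ∀ i j, P i * P j = P j * P i) {i j : Fin n} (hij : i ≠ j)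
    (f : Fam n A) : hmt P i (hmt P j f) = - hmt P j (hmt P i f) := by
  have hji : j ≠ i := hij.symm
  funext s
  simp only [hmt, Pi.neg_apply, Function.update_of_ne hij, Function.update_of_ne hji,
    Function.update_self]
  by_cases hi : s i = 0
  · by_cases hj : s j = 0
    · rcases lt_or_gt_of_ne hij with h | h
      · -- i < j
        have z1 : zcount (Function.update s i 1) j = zcount s j :=
          zcount_update_of_le (le_of_lt h) s 1
        have z2 : zcount (Function.update s i (-1)) j = zcount s j :=
          zcount_update_of_le (le_of_lt h) s (-1)
        have z3 : zcount (Function.update s j 1) i + 1 = zcount s i :=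
          zcount_update_succ h hj st_one_ne
        have e : zcount (Function.update s j (-1)) i = zcount (Function.update s j 1) i := by
          have := zcount_update_succ h hj st_negone_ne
          omega
        simp only [if_pos hi, if_pos hj, z1, z2, e]
        rw [← z3]
        simp only [Function.update_comm hij, mul_smul_comm, ← smul_add]
        rw [negpow_flip2, cross_expand (hcomm i j)]
      · -- j < i
        have z1 : zcount (Function.update s i 1) j + 1 = zcount s j :=
          zcount_update_succ h hi st_one_ne
        have e : zcount (Function.update s i (-1)) j = zcount (Function.update s i 1) j := by
          have := zcount_update_succ h hi st_negone_ne
          omega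
        have z3 : zcount (Function.update s j 1) i = zcount s i :=
          zcount_update_of_le (le_of_lt h) s 1
        have z4 : zcount (Function.update s j (-1)) i = zcount s i :=
          zcount_update_of_le (le_of_lt h) s (-1)
        simp only [if_pos hi, if_pos hj, z3, z4, e]
        rw [← z1]
        simp only [Function.update_comm hij, mul_smul_comm, ← smul_add]
        rw [negpow_flip2, neg_neg, cross_expand (hcomm i j)]
    · simp [hi, hj]
  · by_cases hj : s j = 0 <;> simp [hi, hj]

lemma bd_hmt_homotopy (i : Fin n) (f : Fam n A) :
    bd i (hmt P i f) + hmt P i (bd i f) = f - eps P i f := by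
  funext s
  simp only [bd, hmt, eps, Pi.add_apply, Pi.sub_apply, Function.update_self,
    Function.update_idem, if_neg st_one_ne, if_neg st_negone_ne]
  rcases hi : s i with _ | _ | _
  · have h0 : Function.update s i 0 = s := by
      funext t
      rcases eq_or_ne t i with rfl | h
      · simp [hi]
      · simp [Function.update_of_ne h]
    have z1 : zcount (Function.update s i 1) i = zcount s i :=
      zcount_update_of_le le_rfl s 1
    have z2 : zcount (Function.update s i (-1)) i = zcount s i :=
      zcount_update_of_le le_rfl s (-1)
    simp only [hi, st_zero_eq, coe_st_zero, zero_smul, reduceIte, z1, z2, h0,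
      mul_smul_comm, ← smul_add, negpow_self_smul]
    rw [one_sub_mul, sub_zero]
    abel
  · -- s i = neg
    have h1 : Function.update s i (-1) = s := by
      funext t
      rcases eq_or_ne t i with rfl | h
      · simp [hi]
      · simp [Function.update_of_ne h]
    have z1 : zcount (Function.update s i 0) i = zcount s i :=
      zcount_update_of_le le_rfl s 0
    simp only [hi, if_neg st_neg_ne, st_zero_eq, reduceIte, z1, h1, coe_st_neg, Psgn_neg,
      neg_one_zsmul, one_smul, negpow_self_smul]
    rw [one_sub_mul, one_sub_mul]
    simp only [mul_add, mul_neg]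
    abel
  · -- s i = pos
    have h1 : Function.update s i 1 = s := by
      funext t
      rcases eq_or_ne t i with rfl | h
      · simp [hi]
      · simp [Function.update_of_ne h]
    have z1 : zcount (Function.update s i 0) i = zcount s i :=
      zcount_update_of_le le_rfl s 0
    simp only [hi, if_neg st_pos_ne, st_zero_eq, reduceIte, z1, h1, coe_st_pos, Psgn_pos,
      neg_one_zsmul, one_smul, negpow_self_smul]
    rw [one_sub_mul]
    simp only [mul_add, mul_neg]
    abel

end

section
variable {n : ℕ} {A : Type*} [Ring A] (P : Fin n → A)

lemma epsUpTo_succ (m : ℕ) (f : Fam n A) :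
    epsUpTo P (m+1) f
      = if h : m < n then epsUpTo P m (eps P ⟨m, h⟩ f) else epsUpTo P m f := rfl

lemma epsUpTo_zero (m : ℕ) : epsUpTo P m (0 : Fam n A) = 0 := by
  induction m with
  | zero => rfl
  | succ m ih =>
    rw [epsUpTo_succ]
    split_ifs with h
    · rw [eps_zero, ih]
    · exact ih

lemma epsUpTo_add (m : ℕ) (f g : Fam n A) :
    epsUpTo P m (f + g) = epsUpTo P m f + epsUpTo P m g := by
  induction m generalizing f g with
  | zero => rfl
  | succ m ih =>
    rw [epsUpTo_succ, epsUpTo_succ, epsUpTo_succ]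
    split_ifs with h
    · rw [eps_add, ih]
    · exact ih f g

lemma epsUpTo_neg (m : ℕ) (f : Fam n A) : epsUpTo P m (-f) = - epsUpTo P m f := by
  have h := epsUpTo_add P m f (-f)
  rw [add_neg_cancel, epsUpTo_zero] at h
  exact eq_neg_of_add_eq_zero_right h.symm

lemma epsUpTo_sub (m : ℕ) (f g : Fam n A) :
    epsUpTo P m (f - g) = epsUpTo P m f - epsUpTo P m g := by
  rw [sub_eq_add_neg, epsUpTo_add, epsUpTo_neg, sub_eq_add_neg]

lemma hmt_epsUpTo_comm (hcomm : ∀ i j, P i * P j = P j * P i) {i : Fin n} :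
    ∀ {m : ℕ}, m ≤ (i : ℕ) → ∀ f : Fam n A,
      hmt P i (epsUpTo P m f) = epsUpTo P m (hmt P i f) := by
  intro m
  induction m with
  | zero => intro _ f; rfl
  | succ m ih =>
    intro hm f
    rw [epsUpTo_succ, epsUpTo_succ]
    split_ifs with h
    · rw [ih (by omega), hmt_eps_comm P hcomm (by exact Fin.ne_of_val_ne (show _ ≠ m by omega))]
    · exact ih (by omega) f

lemma bd_epsUpTo_comm {k : Fin n} (hcomm : ∀ i j, P i * P j = P j * P i) :
    ∀ {m : ℕ}, m ≤ (k : ℕ) → ∀ f : Fam n A,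
      bd k (epsUpTo P m f) = epsUpTo P m (bd k f) := by
  intro m
  induction m with
  | zero => intro _ f; rfl
  | succ m ih =>
    intro hm f
    rw [epsUpTo_succ, epsUpTo_succ]
    split_ifs with h
    · rw [ih (by omega), bd_eps_comm P hcomm (by exact Fin.ne_of_val_ne (show _ ≠ m by omega))]
    · exact ih (by omega) f

lemma hmt_epsUpTo_vanish (hcomm : ∀ i j, P i * P j = P j * P i)
    (hidem : ∀ i, P i * P i = P i) {i : Fin n} :
    ∀ {m : ℕ}, (i : ℕ) < m → ∀ f : Fam n A, hmt P i (epsUpTo P m f) = 0 := by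
  intro m
  induction m with
  | zero => omega
  | succ m ih =>
    intro hm f
    rw [epsUpTo_succ]
    split_ifs with h
    · rcases Nat.lt_or_ge (i : ℕ) m with hlt | hge
      · exact ih hlt _
      · have hi : i = ⟨m, h⟩ := Fin.ext (show _ = m by omega)
        subst hi
        rw [hmt_epsUpTo_comm P hcomm le_rfl, hmt_eps_self P hidem, epsUpTo_zero]
    · exact ih (by omega) f

lemma epsUpTo_hmt_vanish (hcomm : ∀ i j, P i * P j = P j * P i) {j : Fin n} :
    ∀ {m : ℕ}, (j : ℕ) < m → ∀ f : Fam n A, epsUpTo P m (hmt P j f) = 0 := by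
  intro m
  induction m with
  | zero => omega
  | succ m ih =>
    intro hm f
    rw [epsUpTo_succ]
    split_ifs with h
    · rcases Nat.lt_or_ge (j : ℕ) m with hlt | hge
      · rw [← hmt_eps_comm P hcomm (Fin.ne_of_val_ne (show _ ≠ m by omega)), ih hlt]
      · have hj : j = ⟨m, h⟩ := Fin.ext (show _ = m by omega)
        subst hj
        rw [eps_hmt_self, epsUpTo_zero]
    · exact ih (by omega) f

lemma bd_epsUpTo_vanish (hcomm : ∀ i j, P i * P j = P j * P i) {k : Fin n} :
    ∀ {m : ℕ}, (k : ℕ) < m → ∀ f : Fam n A, bd k (epsUpTo P m f) = 0 := by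
  intro m
  induction m with
  | zero => omega
  | succ m ih =>
    intro hm f
    rw [epsUpTo_succ]
    split_ifs with h
    · rcases Nat.lt_or_ge (k : ℕ) m with hlt | hge
      · exact ih hlt _
      · have hk : k = ⟨m, h⟩ := Fin.ext (show _ = m by omega)
        subst hk
        rw [bd_epsUpTo_comm P hcomm le_rfl, bd_eps_self P, epsUpTo_zero]
    · exact ih (by omega) f

lemma epsUpTo_bd_vanish (hcomm : ∀ i j, P i * P j = P j * P i) {k : Fin n} :
    ∀ {m : ℕ}, (k : ℕ) < m → ∀ f : Fam n A, epsUpTo P m (bd k f) = 0 := by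
  intro m
  induction m with
  | zero => omega
  | succ m ih =>
    intro hm f
    rw [epsUpTo_succ]
    split_ifs with h
    · rcases Nat.lt_or_ge (k : ℕ) m with hlt | hge
      · rw [← bd_eps_comm P hcomm (Fin.ne_of_val_ne (show _ ≠ m by omega)), ih hlt]
      · have hk : k = ⟨m, h⟩ := Fin.ext (show _ = m by omega)
        subst hk
        rw [eps_bd_self, epsUpTo_zero]
    · exact ih (by omega) f

lemma hmt_sum {ι : Type*} (i : Fin n) (t : Finset ι) (g : ι → Fam n A) :
    hmt P i (∑ j ∈ t, g j) = ∑ j ∈ t, hmt P i (g j) := by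
  classical
  induction t using Finset.induction_on with
  | empty => simpa using hmt_zero P i
  | insert _ _ hj ih => rw [Finset.sum_insert hj, Finset.sum_insert hj, hmt_add, ih]

lemma bd_sum {ι : Type*} (i : Fin n) (t : Finset ι) (g : ι → Fam n A) :
    bd i (∑ j ∈ t, g j) = ∑ j ∈ t, bd i (g j) := by
  classical
  induction t using Finset.induction_on with
  | empty => simpa using bd_zero i (A := A)
  | insert _ _ hj ih => rw [Finset.sum_insert hj, Finset.sum_insert hj, bd_add, ih]

end

section
variable {n : ℕ} {A : Type*} [Ring A] (P : Fin n → A)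

lemma epsUpTo_sum {ι : Type*} (m : ℕ) (t : Finset ι) (g : ι → Fam n A) :
    epsUpTo P m (∑ j ∈ t, g j) = ∑ j ∈ t, epsUpTo P m (g j) := by
  classical
  induction t using Finset.induction_on with
  | empty => simpa using epsUpTo_zero P m
  | insert _ _ hj ih => rw [Finset.sum_insert hj, Finset.sum_insert hj, epsUpTo_add, ih]

lemma bigH_eq (f : Fam n A) :
    bigH P f = ∑ i : Fin n, epsUpTo P (i : ℕ) (hmt P i f) := by
  funext s
  rw [bigH, Finset.sum_apply]

lemma bigD_eq (f : Fam n A) : bigD f = ∑ i : Fin n, bd i f := by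
  funext s
  rw [bigD, Finset.sum_apply]

end

theorem bigH_identities {n : ℕ} {A : Type*} [Ring A] (P : Fin n → A)
    (hidem : ∀ i, P i * P i = P i)
    (hcomm : ∀ i j, P i * P j = P j * P i) :
    (∀ f : Fam n A, bigH P (bigH P f) = 0) ∧
    (∀ f : Fam n A, bigD (bigH P f) + bigH P (bigD f) = f - epsUpTo P n f) := by
  constructor
  · intro f
    rw [bigH_eq P f, bigH_eq]
    calc ∑ i : Fin n, epsUpTo P (i:ℕ)
            (hmt P i (∑ j : Fin n, epsUpTo P (j:ℕ) (hmt P j f)))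
        = ∑ i : Fin n, ∑ j : Fin n,
            epsUpTo P (i:ℕ) (hmt P i (epsUpTo P (j:ℕ) (hmt P j f))) := by
          refine Finset.sum_congr rfl fun i _ => ?_
          rw [hmt_sum, epsUpTo_sum]
      _ = 0 := by
          refine Finset.sum_eq_zero fun i _ => Finset.sum_eq_zero fun j _ => ?_
          rcases lt_trichotomy i j with h | h | h
          · rw [hmt_epsUpTo_vanish P hcomm hidem h, epsUpTo_zero]
          · subst h
            rw [hmt_epsUpTo_comm P hcomm le_rfl, hmt_hmt_self, epsUpTo_zero, epsUpTo_zero]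
          · rw [hmt_epsUpTo_comm P hcomm (le_of_lt h),
              hmt_hmt_anti P hcomm (ne_of_gt h), epsUpTo_neg,
              ← hmt_epsUpTo_comm P hcomm le_rfl, epsUpTo_neg,
              epsUpTo_hmt_vanish P hcomm h]
            simp
  · intro f
    rw [bigD_eq, bigH_eq P f, bigH_eq P (bigD f), bigD_eq f]
    calc (∑ k : Fin n, bd k (∑ i : Fin n, epsUpTo P (i:ℕ) (hmt P i f)))
          + ∑ i : Fin n, epsUpTo P (i:ℕ) (hmt P i (∑ k : Fin n, bd k f))
        = (∑ k : Fin n, ∑ i : Fin n, bd k (epsUpTo P (i:ℕ) (hmt P i f)))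
          + ∑ i : Fin n, ∑ k : Fin n, epsUpTo P (i:ℕ) (hmt P i (bd k f)) := by
          congr 1
          · exact Finset.sum_congr rfl fun k _ => bd_sum k _ _
          · refine Finset.sum_congr rfl fun i _ => ?_
            rw [hmt_sum, epsUpTo_sum]
      _ = ∑ i : Fin n, ∑ k : Fin n,
            (bd k (epsUpTo P (i:ℕ) (hmt P i f))
              + epsUpTo P (i:ℕ) (hmt P i (bd k f))) := by
          rw [Finset.sum_comm, ← Finset.sum_add_distrib]
          exact Finset.sum_congr rfl fun i _ => (Finset.sum_add_distrib).symm
      _ = ∑ i : Fin n, (epsUpTo P (i:ℕ) f - epsUpTo P ((i:ℕ)+1) f) := by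
          refine Finset.sum_congr rfl fun i _ => ?_
          rw [Finset.sum_eq_single i]
          · rw [bd_epsUpTo_comm P hcomm le_rfl, ← epsUpTo_add, bd_hmt_homotopy,
              epsUpTo_sub, epsUpTo_succ, dif_pos i.isLt, Fin.eta]
          · intro k _ hki
            rcases lt_or_gt_of_ne hki with h | h
            · -- k < i
              rw [bd_epsUpTo_vanish P hcomm h,
                show hmt P i (bd k f) = -(bd k (hmt P i f)) by
                  rw [bd_hmt_anti P hki, neg_neg],
                epsUpTo_neg, epsUpTo_bd_vanish P hcomm h]
              simp
            · -- i < k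
              rw [bd_epsUpTo_comm P hcomm (le_of_lt h), ← epsUpTo_add,
                show bd k (hmt P i f) + hmt P i (bd k f) = 0 by
                  rw [bd_hmt_anti P hki, neg_add_cancel],
                epsUpTo_zero]
          · intro h
            exact absurd (Finset.mem_univ i) h
      _ = f - epsUpTo P n f := by
          rw [Fin.sum_univ_eq_sum_range (fun m => epsUpTo P m f - epsUpTo P (m+1) f),
            Finset.sum_range_sub' (fun m => epsUpTo P m f)]
          rfl
end

section
/- The Parshin residue map on n-forms of the Laurent polynomial ring, defined on monomial forms by res(t_1^{c_{0,1}}⋯t_n^{c_{0,n}} d(t_1^{c_{1,1}}⋯t_n^{c_{1,n}}) ∧ ⋯ ∧ d(t_1^{c_{n,1}}⋯t_n^{c_{n,n}})) := det(c_{i,j})_{1≤i,j≤n} when Σ_{p=0}^n c_{p,i} = 0 for all i, and 0 otherwise, satisfies: for f_i = t_1^{c_{i,1}}⋯t_n^{c_{i,n}} multiplication operators and the projectors P_j^± onto λ_j ≥ 0 (resp. λ_j < 0), one has res f_0 df_1 ⋯ df_n = (−1)^n tr Σ_{π∈S_n} sgn(π) Σ_{γ_1…γ_n∈{±}} (−1)^{γ_1+⋯+γ_n}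 (P_1^{−γ_1} ad(f_{π(1)}) P_1^{γ_1}) ⋯ (P_n^{−γ_n} ad(f_{π(n)}) P_n^{γ_n}) f_0. -/
/-!
STATEMENT 19: The Parshin residue on monomial `n`-forms of
`k[t₁^±,…,t_n^±]`, given by `res(t^{c₀} d(t^{c₁}) ∧ ⋯ ∧ d(t^{c_n})) =
det(c_{i,j})` when `∑_{p=0}^n c_{p,i} = 0` for all `i` and `0` otherwise,
equals the operator-theoretic expression
`(−1)^n tr ∑_{π∈S_n} sgn(π) ∑_{γ₁…γ_n∈{±}} (−1)^{γ₁+⋯+γ_n}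
  (P₁^{−γ₁} ad(f_{π(1)}) P₁^{γ₁}) ⋯ (P_n^{−γ_n} ad(f_{π(n)}) P_n^{γ_n}) f₀`,
where `f_i` is multiplication by `t₁^{c_{i,1}}⋯t_n^{c_{i,n}}` and `P_j^±` are
the projectors onto monomials with `λ_j ≥ 0` (resp. `λ_j < 0`).
-/

open scoped Classical

/-- Multiplication by the monomial `t₁^{c 1} ⋯ t_n^{c n}`. -/
noncomputable def monoOp {n : ℕ} (k : Type*) [Field k] (c : Fin n → ℤ) :
    Module.End k ((Fin n → ℤ) →₀ k) :=
  Finsupp.lmapDomain k k (fun m => m + c)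

/-- The projector `P_j⁺` onto monomials with `λ_j ≥ 0`. -/
noncomputable def PplusJ {n : ℕ} (k : Type*) [Field k] (j : Fin n) :
    Module.End k ((Fin n → ℤ) →₀ k) :=
  Finsupp.lsum k fun m : Fin n → ℤ => if 0 ≤ m j then Finsupp.lsingle m else 0

/-- `P_j^γ` for a sign `γ` (encoded by a boolean: `true` is `+`). -/
noncomputable def PsgnJ {n : ℕ} (k : Type*) [Field k] (j : Fin n) (b : Bool) :
    Module.End k ((Fin n → ℤ) →₀ k) :=
  if b then PplusJ k j else 1 - PplusJ k j

/-- The diagonal trace (the operators below have finite rank, and the trace is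
the sum of the diagonal matrix entries in the monomial basis). -/
noncomputable def trDN {n : ℕ} {k : Type*} [Field k]
    (φ : Module.End k ((Fin n → ℤ) →₀ k)) : k :=
  ∑ᶠ m : Fin n → ℤ, φ (Finsupp.single m 1) m

/-- `(P₁^{−γ₁} ad(f_{π(1)}) P₁^{γ₁}) ⋯ (P_n^{−γ_n} ad(f_{π(n)}) P_n^{γ_n}) f₀`,
where `f_i = monoOp k (c i)` (row `0` of `c` being `f₀`) and
`ad(f) x = f x − x f`. -/
noncomputable def residueTerm {n : ℕ} (k : Type*) [Field k]
    (c : Fin (n + 1) → Fin n → ℤ) (π : Equiv.Perm (Fin n)) (γ : Fin n → Bool) :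
    Module.End k ((Fin n → ℤ) →₀ k) :=
  (List.finRange n).foldr
    (fun i acc =>
      PsgnJ k i (!γ i) *
        (monoOp k (c (π i).succ) * (PsgnJ k i (γ i) * acc)
          - (PsgnJ k i (γ i) * acc) * monoOp k (c (π i).succ)))
    (monoOp k (c 0))

section Helpers

variable {n : ℕ} {k : Type*} [Field k]

lemma monoOp_single (c : Fin n → ℤ) (m : Fin n → ℤ) (a : k) :
    monoOp k c (Finsupp.single m a) = Finsupp.single (m + c) a := by
  simp [monoOp, Finsupp.mapDomain_single]

lemma PplusJ_single (j : Fin n) (m : Fin n → ℤ) (a : k) :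
    PplusJ k j (Finsupp.single m a) = if 0 ≤ m j then Finsupp.single m a else 0 := by
  rw [PplusJ, Finsupp.lsum_single]
  split_ifs with h <;> simp

lemma PsgnJ_single (j : Fin n) (b : Bool) (m : Fin n → ℤ) (a : k) :
    PsgnJ k j b (Finsupp.single m a) =
      if decide (0 ≤ m j) = b then Finsupp.single m a else 0 := by
  by_cases h : 0 ≤ m j <;> cases b <;>
    simp [PsgnJ, PplusJ_single, h, LinearMap.sub_apply]

lemma PsgnJ_not_mul (j : Fin n) (b : Bool) :
    PsgnJ k j (!b) * PsgnJ k j b = 0 := by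
  apply Finsupp.lhom_ext
  intro m a
  rw [Module.End.mul_apply, PsgnJ_single]
  split_ifs with h
  · rw [PsgnJ_single]
    simp [h]
  · simp


noncomputable def Qop {n : ℕ} (k : Type*) [Field k] (f : Fin n → ℤ) (i : Fin n) (b : Bool) :
    Module.End k ((Fin n → ℤ) →₀ k) :=
  PsgnJ k i (!b) * monoOp k f * PsgnJ k i b

noncomputable def qcoef {n : ℕ} (k : Type*) [Field k] (f : Fin n → ℤ) (i : Fin n) (b : Bool)
    (v : Fin n → ℤ) : k :=
  (if decide (0 ≤ v i) = b then 1 else 0) * (if decide (0 ≤ v i + f i) = !b then 1 else 0)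

lemma Qop_single (f : Fin n → ℤ) (i : Fin n) (b : Bool) (m : Fin n → ℤ) :
    Qop k f i b (Finsupp.single m 1) = qcoef k f i b m • Finsupp.single (m + f) 1 := by
  rw [Qop, Module.End.mul_apply, Module.End.mul_apply, PsgnJ_single]
  have hv : (m + f) i = m i + f i := rfl
  split_ifs with h
  · rw [monoOp_single, PsgnJ_single, qcoef, hv, if_pos h]
    split_ifs with h2 <;> simp
  · rw [qcoef, if_neg h]
    simp

lemma residueTerm_eq {n : ℕ} (k : Type*) [Field k] (c : Fin (n + 1) → Fin n → ℤ)
    (π : Equiv.Perm (Fin n)) (γ : Fin n → Bool) :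
    residueTerm k c π γ =
      (List.finRange n).foldr (fun i acc => Qop k (c (π i).succ) i (γ i) * acc)
        (monoOp k (c 0)) := by
  rw [residueTerm]
  induction (List.finRange n) with
  | nil => rfl
  | cons i l ih =>
    simp only [List.foldr_cons, ih]
    generalize (List.foldr (fun i acc => Qop k (c (π i).succ) i (γ i) * acc)
        (monoOp k (c 0)) l) = A
    have key : PsgnJ k i (!γ i) * PsgnJ k i (γ i) = 0 := PsgnJ_not_mul i (γ i)
    calc PsgnJ k i (!γ i) *
        (monoOp k (c (π i).succ) * (PsgnJ k i (γ i) * A)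
          - PsgnJ k i (γ i) * A * monoOp k (c (π i).succ))
        = (PsgnJ k i (!γ i) * monoOp k (c (π i).succ) * PsgnJ k i (γ i)) * A
            - (PsgnJ k i (!γ i) * PsgnJ k i (γ i)) * (A * monoOp k (c (π i).succ)) := by
          noncomm_ring
          simp only [mul_add, mul_smul_comm, mul_assoc]
      _ = Qop k (c (π i).succ) i (γ i) * A := by
          rw [key, zero_mul, Qop]
          noncomm_ring

lemma foldr_single (c : Fin (n + 1) → Fin n → ℤ) (π : Equiv.Perm (Fin n))
    (l : List (Fin n)) (hl : l.Nodup) :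
    ∃ r : Fin n → Fin n → ℤ, ∀ (γ : Fin n → Bool) (m : Fin n → ℤ),
      (l.foldr (fun i acc => Qop k (c (π i).succ) i (γ i) * acc) (monoOp k (c 0)))
          (Finsupp.single m 1)
        = (∏ i ∈ l.toFinset, qcoef k (c (π i).succ) i (γ i) (m + r i)) •
            Finsupp.single (m + (c 0 + ∑ i ∈ l.toFinset, c (π i).succ)) 1 := by
  induction l with
  | nil =>
    exact ⟨0, fun γ m => by simp [monoOp_single]⟩
  | cons i l ih =>
    obtain ⟨r, hr⟩ := ih (List.Nodup.of_cons hl)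
    have hi : i ∉ l := (List.nodup_cons.mp hl).1
    have hi' : i ∉ l.toFinset := by simpa using hi
    refine ⟨Function.update r i (c 0 + ∑ j ∈ l.toFinset, c (π j).succ), fun γ m => ?_⟩
    rw [List.foldr_cons, Module.End.mul_apply, hr, map_smul, Qop_single, smul_smul,
      List.toFinset_cons, Finset.prod_insert hi', Finset.sum_insert hi']
    have hprod : ∀ j ∈ l.toFinset,
        qcoef k (c (π j).succ) j (γ j)
            (m + Function.update r i (c 0 + ∑ j ∈ l.toFinset, c (π j).succ) j)
          = qcoef k (c (π j).succ) j (γ j) (m + r j) := by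
      intro j hj
      rw [Function.update_of_ne (by rintro rfl; exact hi' hj)]
    rw [Finset.prod_congr rfl hprod, Function.update_self, mul_comm,
      show m + (c 0 + ∑ i ∈ l.toFinset, c (π i).succ) + c (π i).succ
          = m + (c 0 + (c (π i).succ + ∑ x ∈ l.toFinset, c (π x).succ)) by abel]

noncomputable def hfun (k : Type*) [Field k] (a δ : ℤ) (x : ℤ) : k :=
  (if x ∈ Finset.Ico (-a) (-a - δ) then 1 else 0)
    - (if x ∈ Finset.Ico (-a - δ) (-a) then 1 else 0)

lemma qcoef_sum (f : Fin n → ℤ) (i : Fin n) (m ro : Fin n → ℤ) :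
    ∑ b : Bool, (if b then (1 : k) else -1) * qcoef k f i b (m + ro)
      = hfun k (ro i) (f i) (m i) := by
  have hv : (m + ro) i = m i + ro i := rfl
  simp only [Fintype.sum_bool, qcoef, hfun, hv, if_true, if_false, Bool.not_true,
    Bool.not_false, Finset.mem_Ico, decide_eq_true_eq, decide_eq_false_iff_not, not_le]
  split_ifs <;> first | ring1 | (exfalso; first | assumption | omega)

lemma hfun_sum (a δ : ℤ) (S : Finset ℤ) (hA : Finset.Ico (-a) (-a - δ) ⊆ S)
    (hB : Finset.Ico (-a - δ) (-a) ⊆ S) :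
    ∑ x ∈ S, hfun k a δ x = ((-δ : ℤ) : k) := by
  unfold hfun
  rw [Finset.sum_sub_distrib, Finset.sum_ite_mem, Finset.sum_ite_mem,
    Finset.inter_eq_right.mpr hA, Finset.inter_eq_right.mpr hB,
    Finset.sum_const, Finset.sum_const, Int.card_Ico, Int.card_Ico]
  have h3 : (((-a - δ - -a).toNat : ℤ) - ((-a - (-a - δ)).toNat : ℤ)) = -δ := by omega
  rw [show ((-δ : ℤ) : k) = (((-a - δ - -a).toNat : ℤ) : k) - (((-a - (-a - δ)).toNat : ℤ) : k)
      by rw [← Int.cast_sub, h3]]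
  push_cast
  ring

end Helpers

set_option maxHeartbeats 1600000 in
theorem parshin_residue_as_trace {n : ℕ} {k : Type*} [Field k]
    (c : Fin (n + 1) → Fin n → ℤ) :
    ((if ∀ j : Fin n, ∑ p : Fin (n + 1), c p j = 0
        then Matrix.det (Matrix.of fun i j : Fin n => c i.succ j)
        else 0 : ℤ) : k)
    = (-1 : k) ^ n *
        trDN (∑ π : Equiv.Perm (Fin n),
          ((Equiv.Perm.sign π : ℤˣ) : ℤ) •
            ∑ γ : Fin n → Bool,
              (∏ i : Fin n, (if γ i then (1 : ℤ) else -1)) • residueTerm k c π γ) := by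
  classical
  choose r hr using fun π : Equiv.Perm (Fin n) =>
    foldr_single (k := k) c π (List.finRange n) (List.nodup_finRange n)
  set s : Fin n → ℤ := fun j => ∑ p : Fin (n + 1), c p j with hs
  have htF : (List.finRange n).toFinset = (Finset.univ : Finset (Fin n)) := by
    ext x; simp [List.mem_finRange]
  have hshift : ∀ π : Equiv.Perm (Fin n),
      c 0 + ∑ i ∈ (List.finRange n).toFinset, c (π i).succ = s := by
    intro π
    rw [htF]
    funext j
    simp only [Pi.add_apply, Finset.sum_apply, hs]
    rw [Fin.sum_univ_succ]
    congr 1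
    exact Equiv.sum_comp π (fun i => c i.succ j)
  have hT : ∀ (π : Equiv.Perm (Fin n)) (γ : Fin n → Bool) (m : Fin n → ℤ),
      residueTerm k c π γ (Finsupp.single m 1)
        = (∏ i : Fin n, qcoef k (c (π i).succ) i (γ i) (m + r π i)) •
            Finsupp.single (m + s) 1 := by
    intro π γ m
    have h := hr π γ m
    rw [hshift π, htF] at h
    rw [residueTerm_eq, h]
  have hγ : ∀ (π : Equiv.Perm (Fin n)) (m : Fin n → ℤ),
      ∑ γ : Fin n → Bool, (∏ i : Fin n, (if γ i then (1 : k) else -1)) *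
          ∏ i : Fin n, qcoef k (c (π i).succ) i (γ i) (m + r π i)
        = ∏ i : Fin n, hfun k (r π i i) (c (π i).succ i) (m i) := by
    intro π m
    have h1 : ∀ γ : Fin n → Bool,
        (∏ i : Fin n, (if γ i then (1 : k) else -1)) *
            ∏ i : Fin n, qcoef k (c (π i).succ) i (γ i) (m + r π i)
          = ∏ i : Fin n,
              ((if γ i then (1 : k) else -1) * qcoef k (c (π i).succ) i (γ i) (m + r π i)) :=
      fun γ => (Finset.prod_mul_distrib).symm
    simp_rw [h1]
    rw [show (∑ γ : Fin n → Bool, ∏ i : Fin n,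
          ((if γ i then (1 : k) else -1) * qcoef k (c (π i).succ) i (γ i) (m + r π i)))
        = ∏ i : Fin n, ∑ b : Bool,
          ((if b then (1 : k) else -1) * qcoef k (c (π i).succ) i b (m + r π i)) from
      (Fintype.prod_sum fun i b =>
        (if b then (1 : k) else -1) * qcoef k (c (π i).succ) i b (m + r π i)).symm]
    exact Finset.prod_congr rfl fun i _ => qcoef_sum (c (π i).succ) i m (r π i)
  have happ : ∀ m : Fin n → ℤ,
      (∑ π : Equiv.Perm (Fin n), ((Equiv.Perm.sign π : ℤˣ) : ℤ) •
        ∑ γ : Fin n → Bool,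
          (∏ i : Fin n, (if γ i then (1 : ℤ) else -1)) • residueTerm k c π γ)
        (Finsupp.single m 1) m
      = (∑ π : Equiv.Perm (Fin n), (((Equiv.Perm.sign π : ℤˣ) : ℤ) : k) *
          ∏ i : Fin n, hfun k (r π i i) (c (π i).succ i) (m i))
        * (Finsupp.single (m + s) (1 : k)) m := by
    intro m
    simp only [LinearMap.sum_apply, LinearMap.smul_apply, hT, Finsupp.finset_sum_apply,
      Finsupp.smul_apply, smul_eq_mul, zsmul_eq_mul, Int.cast_prod, Int.cast_ite, Int.cast_one,
      Int.cast_neg]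
    rw [Finset.sum_mul]
    refine Finset.sum_congr rfl fun π _ => ?_
    rw [← hγ π m, mul_assoc, Finset.sum_mul]
    congr 1
    exact Finset.sum_congr rfl fun γ _ => by ring
  by_cases hc : ∀ j : Fin n, ∑ p : Fin (n + 1), c p j = 0
  · -- the residue condition holds
    have hs0 : s = 0 := by
      rw [hs]; funext j; exact hc j
    have heval : ∀ m : Fin n → ℤ, (Finsupp.single (m + s) (1 : k)) m = 1 := by
      intro m
      rw [hs0, add_zero, Finsupp.single_eq_same]
    set T : Fin n → Finset ℤ := fun i => Finset.univ.biUnion fun π : Equiv.Perm (Fin n) =>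
      Finset.Ico (-(r π i i)) (-(r π i i) - c (π i).succ i) ∪
        Finset.Ico (-(r π i i) - c (π i).succ i) (-(r π i i)) with hTdef
    have hsubA : ∀ (π : Equiv.Perm (Fin n)) (i : Fin n),
        Finset.Ico (-(r π i i)) (-(r π i i) - c (π i).succ i) ⊆ T i := by
      intro π i x hx
      rw [hTdef]
      exact Finset.mem_biUnion.mpr ⟨π, Finset.mem_univ _, Finset.mem_union_left _ hx⟩
    have hsubB : ∀ (π : Equiv.Perm (Fin n)) (i : Fin n),
        Finset.Ico (-(r π i i) - c (π i).succ i) (-(r π i i)) ⊆ T i := by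
      intro π i x hx
      rw [hTdef]
      exact Finset.mem_biUnion.mpr ⟨π, Finset.mem_univ _, Finset.mem_union_right _ hx⟩
    have hzero : ∀ (m : Fin n → ℤ) (i : Fin n), m i ∉ T i → ∀ π : Equiv.Perm (Fin n),
        hfun k (r π i i) (c (π i).succ i) (m i) = 0 := by
      intro m i hi π
      have h1 : m i ∉ Finset.Ico (-(r π i i)) (-(r π i i) - c (π i).succ i) :=
        fun h => hi (hsubA π i h)
      have h2 : m i ∉ Finset.Ico (-(r π i i) - c (π i).succ i) (-(r π i i)) :=
        fun h => hi (hsubB π i h)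
      simp only [hfun, if_neg h1, if_neg h2, sub_zero]
    have hRHS : trDN (∑ π : Equiv.Perm (Fin n),
          ((Equiv.Perm.sign π : ℤˣ) : ℤ) •
            ∑ γ : Fin n → Bool,
              (∏ i : Fin n, (if γ i then (1 : ℤ) else -1)) • residueTerm k c π γ)
        = ∑ π : Equiv.Perm (Fin n), (((Equiv.Perm.sign π : ℤˣ) : ℤ) : k) *
            ∏ i : Fin n, ((-(c (π i).succ i) : ℤ) : k) := by
      rw [trDN]
      have hpt : ∀ m : Fin n → ℤ,
          (∑ π : Equiv.Perm (Fin n),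
            ((Equiv.Perm.sign π : ℤˣ) : ℤ) •
              ∑ γ : Fin n → Bool,
                (∏ i : Fin n, (if γ i then (1 : ℤ) else -1)) • residueTerm k c π γ)
            (Finsupp.single m 1) m
          = ∑ π : Equiv.Perm (Fin n), (((Equiv.Perm.sign π : ℤˣ) : ℤ) : k) *
              ∏ i : Fin n, hfun k (r π i i) (c (π i).succ i) (m i) := by
        intro m
        rw [happ m, heval m, mul_one]
      rw [finsum_congr hpt]
      have hsupp : (Function.support fun m : Fin n → ℤ =>
          ∑ π : Equiv.Perm (Fin n), (((Equiv.Perm.sign π : ℤˣ) : ℤ) : k) *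
              ∏ i : Fin n, hfun k (r π i i) (c (π i).succ i) (m i))
          ⊆ ↑(Fintype.piFinset T) := by
        intro m hm
        by_contra hmem
        apply hm
        obtain ⟨i, hi⟩ : ∃ i : Fin n, m i ∉ T i := by
          by_contra hforall
          push_neg at hforall
          exact hmem (Finset.mem_coe.mpr (Fintype.mem_piFinset.mpr hforall))
        refine Finset.sum_eq_zero fun π _ => ?_
        rw [Finset.prod_eq_zero (Finset.mem_univ i) (hzero m i hi π), mul_zero]
      rw [finsum_eq_sum_of_support_subset _ hsupp, Finset.sum_comm]
      refine Finset.sum_congr rfl fun π _ => ?_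
      rw [← Finset.mul_sum]
      congr 1
      rw [show (∑ m ∈ Fintype.piFinset T, ∏ i : Fin n,
            hfun k (r π i i) (c (π i).succ i) (m i))
          = ∏ i : Fin n, ∑ x ∈ T i, hfun k (r π i i) (c (π i).succ i) x from
        (Finset.prod_univ_sum T fun i x => hfun k (r π i i) (c (π i).succ i) x).symm]
      exact Finset.prod_congr rfl fun i _ =>
        hfun_sum (r π i i) (c (π i).succ i) (T i) (hsubA π i) (hsubB π i)
    rw [if_pos hc, hRHS, Matrix.det_apply]
    have hsq : (-1 : k) ^ n * (-1 : k) ^ n = 1 := by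
      rw [← mul_pow]; norm_num
    simp only [Matrix.of_apply]
    rw [Int.cast_sum, Finset.mul_sum]
    refine Finset.sum_congr rfl fun π _ => ?_
    rw [show (Equiv.Perm.sign π) • (∏ x : Fin n, c (π x).succ x)
        = ((Equiv.Perm.sign π : ℤˣ) : ℤ) * (∏ x : Fin n, c (π x).succ x) from Units.smul_def _ _]
    rw [Int.cast_mul, Int.cast_prod]
    have hneg : ∏ i : Fin n, ((-(c (π i).succ i) : ℤ) : k)
        = (-1 : k) ^ n * ∏ i : Fin n, ((c (π i).succ i : ℤ) : k) := by
      rw [show (∏ i : Fin n, ((-(c (π i).succ i) : ℤ) : k))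
            = ∏ i : Fin n, (-1 : k) * ((c (π i).succ i : ℤ) : k) from
          Finset.prod_congr rfl fun i _ => by push_cast; ring,
        Finset.prod_mul_distrib, Finset.prod_const]
      simp
    rw [hneg]
    calc (((Equiv.Perm.sign π : ℤˣ) : ℤ) : k) * (∏ x : Fin n, ((c (π x).succ x : ℤ) : k))
        = ((-1 : k) ^ n * (-1 : k) ^ n) *
            ((((Equiv.Perm.sign π : ℤˣ) : ℤ) : k) *
              ∏ x : Fin n, ((c (π x).succ x : ℤ) : k)) := by
          rw [hsq, one_mul]
      _ = (-1 : k) ^ n * ((((Equiv.Perm.sign π : ℤˣ) : ℤ) : k) *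
            ((-1 : k) ^ n * ∏ x : Fin n, ((c (π x).succ x : ℤ) : k))) := by ring
  · -- the residue condition fails
    rw [if_neg hc, Int.cast_zero, trDN]
    have h0 : ∀ m : Fin n → ℤ,
        (∑ π : Equiv.Perm (Fin n),
          ((Equiv.Perm.sign π : ℤˣ) : ℤ) •
            ∑ γ : Fin n → Bool,
              (∏ i : Fin n, (if γ i then (1 : ℤ) else -1)) • residueTerm k c π γ)
          (Finsupp.single m 1) m = 0 := by
      intro m
      rw [happ m]
      have hsingle : (Finsupp.single (m + s) (1 : k)) m = 0 := by
        rw [Finsupp.single_apply, if_neg]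
        intro hEq
        apply hc
        intro j
        have hs0 : s = 0 := by
          have h' : m + s = m + 0 := by rw [hEq, add_zero]
          exact add_left_cancel h'
        have := congrFun hs0 j
        rw [hs] at this
        simpa using this
      rw [hsingle, mul_zero]
    rw [finsum_congr h0, finsum_zero, mul_zero]
end
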